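/- Random ReLU Neurons Fail to be BNR with High Probability (Proposition 'relu-not-bnr-w.h.p.'): Let B ∈ ℕ₊ with B ≥ 3, and let a = (a_i)_{i=1}^B ∈ ℝ^B have i.i.d. coordinates, each drawn from an atom-free distribution symmetric about 0. Define f(x) = ReLU(aᵀx). Then, with probability at least 1 − (B+2)/2^B, there exist distinct indices i, j, k ∈ [B]₊ such that ReLU(aᵀe_i) = 0 < ReLU(aᵀe_j) = a_j < ReLU(aᵀe_k) = a_k; hence the i-th output coordinate of f takes at least three distinct values on {0,1}^B, so f is not BNR. -/

import Mathlib

/-!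
Statement 9: Random ReLU Neurons Fail to be BNR with High Probability
(Proposition `relu-not-bnr-w.h.p.`).
-/

open MeasureTheory ProbabilityTheory
open scoped ENNReal

/-- **Random ReLU neurons fail to be BNR w.h.p.** Let `B ≥ 3` and let
`a = (a_i)_{i=1}^B` have i.i.d. coordinates drawn from an atom-free
distribution `μ` symmetric about `0`.  Then with probability at least
`1 − (B+2)/2^B` there are distinct indices `i, j, k` with
`ReLU(aᵀe_i) = 0 < ReLU(aᵀe_j) = a_j < ReLU(aᵀe_k) = a_k`; on this event the
output of `f(x) = ReLU(aᵀx)` takes at least three distinct values on the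
Boolean cube, so `f` is not BNR. -/
theorem relu_not_bnr_whp
    {Ω : Type*} [MeasureSpace Ω] [IsProbabilityMeasure (ℙ : Measure Ω)]
    (B : ℕ) (hB : 3 ≤ B)
    (μ : Measure ℝ) [IsProbabilityMeasure μ]
    (hatomfree : ∀ r : ℝ, μ {r} = 0)
    (hsymm : Measure.map (fun t => -t) μ = μ)
    (a : Ω → Fin B → ℝ)
    (hmeas : ∀ i, Measurable fun ω => a ω i)
    (hiid : iIndepFun (fun i ω => a ω i) ℙ)
    (hlaw : ∀ i, Measure.map (fun ω => a ω i) ℙ = μ) :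
    ENNReal.ofReal (1 - ((B : ℝ) + 2) / 2 ^ B) ≤
      ℙ {ω | (∃ i j k : Fin B, i ≠ j ∧ i ≠ k ∧ j ≠ k ∧
                max (a ω i) 0 = 0 ∧
                max (a ω j) 0 = a ω j ∧ max (a ω k) 0 = a ω k ∧
                0 < a ω j ∧ a ω j < a ω k) ∧
             ¬ (∃ u v : ℝ, ∀ x : Fin B → Bool,
                  max (∑ i, a ω i * (cond (x i) 1 0 : ℝ)) 0 = u ∨
                  max (∑ i, a ω i * (cond (x i) 1 0 : ℝ)) 0 = v)} := by
  classical
  -- Abbreviation for the target set.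
  set T : Set Ω := {ω | (∃ i j k : Fin B, i ≠ j ∧ i ≠ k ∧ j ≠ k ∧
                max (a ω i) 0 = 0 ∧
                max (a ω j) 0 = a ω j ∧ max (a ω k) 0 = a ω k ∧
                0 < a ω j ∧ a ω j < a ω k) ∧
             ¬ (∃ u v : ℝ, ∀ x : Fin B → Bool,
                  max (∑ i, a ω i * (cond (x i) 1 0 : ℝ)) 0 = u ∨
                  max (∑ i, a ω i * (cond (x i) 1 0 : ℝ)) 0 = v)} with hTdef
  -- Step 1: the two half-line measures are both `1/2`.
  have hneg : μ (Set.Ioi (0:ℝ)) = μ (Set.Iio 0) := by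
    conv_lhs => rw [← hsymm]
    rw [Measure.map_apply measurable_neg measurableSet_Ioi]
    congr 1
    ext x
    simp [neg_pos]
  have hiic : μ (Set.Iic (0:ℝ)) = μ (Set.Iio 0) := by
    have h : Set.Iic (0:ℝ) = Set.Iio 0 ∪ {0} := by
      ext x; simp [le_iff_lt_or_eq]
    rw [h]
    refine le_antisymm ((measure_union_le _ _).trans ?_) (measure_mono Set.subset_union_left)
    simp [hatomfree 0]
  have hici : μ (Set.Ici (0:ℝ)) = μ (Set.Ioi 0) := by
    have h : Set.Ici (0:ℝ) = Set.Ioi 0 ∪ {0} := by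
      ext x; simp [le_iff_lt_or_eq, eq_comm, or_comm]
    rw [h]
    refine le_antisymm ((measure_union_le _ _).trans ?_) (measure_mono Set.subset_union_left)
    simp [hatomfree 0]
  have hsumm : μ (Set.Iio (0:ℝ)) + μ (Set.Ici 0) = 1 := by
    rw [← measure_union (by simp [Set.disjoint_left]) measurableSet_Ici]
    simp [Set.Iio_union_Ici]
  rw [hici, ← hneg] at hsumm
  have hIoi : μ (Set.Ioi (0:ℝ)) = 1/2 := by
    rw [ENNReal.eq_div_iff two_ne_zero ENNReal.ofNat_ne_top, two_mul]
    exact hsumm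
  have hIic : μ (Set.Iic (0:ℝ)) = 1/2 := by rw [hiic, ← hneg, hIoi]
  -- Step 2: product rule for independent coordinates.
  have hprod : ∀ (s : Fin B → Set ℝ), (∀ i, MeasurableSet (s i)) →
      ℙ (⋂ i, {ω | a ω i ∈ s i}) = ∏ i, μ (s i) := by
    intro s hs
    have h := hiid.measure_inter_preimage_eq_mul Finset.univ (sets := s)
      (fun i _ => hs i)
    simp only [Finset.mem_univ, Set.iInter_true] at h
    rw [show (⋂ i, {ω | a ω i ∈ s i}) = ⋂ i, (fun ω => a ω i) ⁻¹' s i from rfl, h]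
    exact Finset.prod_congr rfl fun i _ => by
      rw [← hlaw i, Measure.map_apply (hmeas i) (hs i)]
  -- Step 3: a.s. no two coordinates coincide.
  have hpair : ∀ i j : Fin B, i ≠ j → ℙ {ω | a ω i = a ω j} = 0 := by
    intro i j hij
    have hind : IndepFun (fun ω => a ω i) (fun ω => a ω j) ℙ := hiid.indepFun hij
    have hmap := (indepFun_iff_map_prod_eq_prod_map_map (hmeas i).aemeasurable
        (hmeas j).aemeasurable).mp hind
    rw [hlaw, hlaw] at hmap
    have hD : MeasurableSet {p : ℝ × ℝ | p.1 = p.2} :=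
      measurableSet_eq_fun measurable_fst measurable_snd
    have hset : {ω | a ω i = a ω j}
        = (fun ω => (a ω i, a ω j)) ⁻¹' {p : ℝ × ℝ | p.1 = p.2} := rfl
    rw [hset, ← Measure.map_apply ((hmeas i).prodMk (hmeas j)) hD, hmap,
      Measure.prod_apply hD]
    simp [hatomfree]
  -- Bad events.
  set Aall : Set Ω := ⋂ i, {ω | a ω i ∈ Set.Ioi (0:ℝ)} with hAdef
  set Non : Set Ω := ⋂ i, {ω | a ω i ∈ Set.Iic (0:ℝ)} with hNdef
  set Only : Fin B → Set Ω :=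
    fun j => ⋂ i, {ω | a ω i ∈ (if i = j then Set.Ioi (0:ℝ) else Set.Iic 0)} with hOdef
  set Npair : Set Ω := ⋃ i, ⋃ j, {ω | i ≠ j ∧ a ω i = a ω j} with hNPdef
  have hAall : ℙ Aall = (1/2 : ℝ≥0∞) ^ B := by
    rw [hAdef, hprod _ (fun _ => measurableSet_Ioi)]
    simp [hIoi]
  have hNon : ℙ Non = (1/2 : ℝ≥0∞) ^ B := by
    rw [hNdef, hprod _ (fun _ => measurableSet_Iic)]
    simp [hIic]
  have hOnly : ∀ j, ℙ (Only j) = (1/2 : ℝ≥0∞) ^ B := by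
    intro j
    rw [hOdef]
    rw [hprod _ (fun i => by split <;> [exact measurableSet_Ioi; exact measurableSet_Iic])]
    have : ∀ i : Fin B, μ (if i = j then Set.Ioi (0:ℝ) else Set.Iic 0) = 1/2 := by
      intro i; split <;> [exact hIoi; exact hIic]
    simp [this]
  have hNpair : ℙ Npair = 0 := by
    rw [hNPdef]
    refine measure_iUnion_null fun i => measure_iUnion_null fun j => ?_
    by_cases hij : i = j
    · subst hij; simp
    · exact measure_mono_null (fun ω hω => hω.2) (hpair i j hij)
  -- The complement of the target set is covered by the bad events.
  have hsub : Tᶜ ⊆ Aall ∪ (Non ∪ ((⋃ j, Only j) ∪ Npair)) := by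
    intro ω hω
    by_contra hc
    simp only [Set.mem_union, not_or] at hc
    obtain ⟨hA, hN, hO, hNP⟩ := hc
    apply hω
    -- extract pointwise information
    have hA' : ∃ i, a ω i ≤ 0 := by
      by_contra h
      push_neg at h
      exact hA (by simp only [hAdef, Set.mem_iInter]; intro i; exact (h i))
    have hN' : ∃ j, 0 < a ω j := by
      by_contra h
      push_neg at h
      exact hN (by simp only [hNdef, Set.mem_iInter]; intro i; exact (h i))
    obtain ⟨i0, hi0⟩ := hA'
    obtain ⟨j0, hj0⟩ := hN'
    have hO' : ∃ k, k ≠ j0 ∧ 0 < a ω k := by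
      by_contra h
      push_neg at h
      refine hO (Set.mem_iUnion.mpr ⟨j0, ?_⟩)
      simp only [hOdef, Set.mem_iInter, Set.mem_setOf_eq]
      intro i
      by_cases hij : i = j0
      · simp [hij, hj0]
      · simpa [hij] using h i hij
    obtain ⟨k0, hk0j0, hk0⟩ := hO'
    have hdist : ∀ i j : Fin B, i ≠ j → a ω i ≠ a ω j := by
      intro i j hij heq
      exact hNP (Set.mem_iUnion.mpr ⟨i, Set.mem_iUnion.mpr ⟨j, ⟨hij, heq⟩⟩⟩)
    -- order the two positive coordinates
    obtain ⟨j, k, hjk, hj, hk, hlt⟩ :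
        ∃ j k : Fin B, j ≠ k ∧ 0 < a ω j ∧ 0 < a ω k ∧ a ω j < a ω k := by
      rcases lt_or_gt_of_ne (hdist k0 j0 hk0j0) with h | h
      · exact ⟨k0, j0, hk0j0, hk0, hj0, h⟩
      · exact ⟨j0, k0, fun e => hk0j0 e.symm, hj0, hk0, h⟩
    have hij' : i0 ≠ j := by rintro rfl; exact absurd hi0 (not_le.mpr hj)
    have hik' : i0 ≠ k := by rintro rfl; exact absurd hi0 (not_le.mpr hk)
    -- the sum over a basis vector picks out one coordinate
    have hsum : ∀ (t : Fin B),
        (∑ i, a ω i * (cond (decide (i = t)) 1 0 : ℝ)) = a ω t := by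
      intro t
      rw [Finset.sum_eq_single t]
      · simp
      · intro b _ hb; simp [hb]
      · simp
    refine ⟨⟨i0, j, k, hij', hik', hjk, max_eq_right hi0, max_eq_left hj.le,
      max_eq_left hk.le, hj, hlt⟩, ?_⟩
    rintro ⟨u, v, huv⟩
    have h0 := huv (fun s => decide (s = i0))
    have hjv := huv (fun s => decide (s = j))
    have hkv := huv (fun s => decide (s = k))
    rw [hsum i0, max_eq_right hi0] at h0
    rw [hsum j, max_eq_left hj.le] at hjv
    rw [hsum k, max_eq_left hk.le] at hkv
    rcases h0 with h0 | h0 <;> rcases hjv with hjv | hjv <;>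
      rcases hkv with hkv | hkv <;> subst_vars <;> linarith
  -- Measure bound on the complement.
  have hTc : ℙ Tᶜ ≤ ((B : ℝ≥0∞) + 2) * (1/2) ^ B := by
    calc ℙ Tᶜ ≤ ℙ (Aall ∪ (Non ∪ ((⋃ j, Only j) ∪ Npair))) := measure_mono hsub
      _ ≤ ℙ Aall + (ℙ Non + (ℙ (⋃ j, Only j) + ℙ Npair)) := by
          refine (measure_union_le _ _).trans ?_
          gcongr
          refine (measure_union_le _ _).trans ?_
          gcongr
          exact measure_union_le _ _
      _ ≤ (1/2) ^ B + ((1/2) ^ B + ((B : ℝ≥0∞) * (1/2) ^ B + 0)) := by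
          gcongr
          · exact hAall.le
          · exact hNon.le
          · refine (measure_iUnion_fintype_le _ _).trans ?_
            simp only [hOnly]
            simp [Finset.sum_const, Finset.card_univ]
          · exact hNpair.le
      _ = ((B : ℝ≥0∞) + 2) * (1/2) ^ B := by ring
  -- Convert the real bound to the `ℝ≥0∞` bound.
  have hkey : ENNReal.ofReal (((B : ℝ) + 2) / 2 ^ B) = ((B : ℝ≥0∞) + 2) * (1/2) ^ B := by
    rw [div_eq_mul_inv, ENNReal.ofReal_mul (by positivity),
      ENNReal.ofReal_inv_of_pos (by positivity), ENNReal.ofReal_pow (by norm_num),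
      ENNReal.ofReal_add (by positivity) (by norm_num)]
    simp [ENNReal.ofReal_natCast, one_div, ENNReal.inv_pow]
  have h1 : (1 : ℝ≥0∞) ≤ ℙ T + ℙ Tᶜ := by
    have := measure_union_le (μ := ℙ) T Tᶜ
    rwa [Set.union_compl_self, measure_univ] at this
  have hfinal : (1 : ℝ≥0∞) - ((B : ℝ≥0∞) + 2) * (1/2) ^ B ≤ ℙ T := by
    rw [tsub_le_iff_right]
    exact h1.trans (by gcongr)
  calc ENNReal.ofReal (1 - ((B : ℝ) + 2) / 2 ^ B)
      = 1 - ENNReal.ofReal (((B : ℝ) + 2) / 2 ^ B) := by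
        rw [ENNReal.ofReal_sub _ (by positivity)]; simp
    _ = 1 - ((B : ℝ≥0∞) + 2) * (1/2) ^ B := by rw [hkey]
    _ ≤ ℙ T := hfinal
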